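/- Fix m ≥ 1 and angles π/2 ≥ θ_1 ≥ … ≥ θ_m ≥ 0. Let n = 2m, C = diag(cos θ_1, …, cos θ_m), A = [[I_m, 0],[0, −I_m]] ∈ ℂ^{n×n}, X = [I_m; 0] ∈ ℂ^{n×m}, and Y = [C; √(I_m − C²)] ∈ ℂ^{n×m}. Then X and Y have orthonormal columns, range(X) is A-invariant, the principal angles between range(X) and range(Y) are exactly (θ_1, …, θ_m), and |λ(X^H A X) − λ(Y^H A Y)| arranged in nonincreasing order equals 2 sin²θ = spr(A) · sin²θ(range(X), range(Y)); i.e., the bound |λ(X^HAX) − λ(Y^HAY)| ≺_w spr(A) sin²θ holds with equality in every partial sum. -/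

import Mathlib

open Matrix Finset

/-- The entries of `x` rearranged in nonincreasing (descending) order. -/
noncomputable def sortDown {k : ℕ} (x : Fin k → ℝ) : Fin k → ℝ :=
  fun i => x (Tuple.sort x i.rev)

/-- The eigenvalues of a Hermitian matrix arranged in nonincreasing order. -/
noncomputable def eigDown {k : ℕ} {M : Matrix (Fin k) (Fin k) ℂ} (hM : M.IsHermitian) :
    Fin k → ℝ :=
  sortDown hM.eigenvalues

/-- The singular values of `B` (square roots of the eigenvalues of `Bᴴ * B`),
arranged in nonincreasing order; there are as many as columns of `B`,
extra ones (beyond `min(#rows, #cols)`) being zero. -/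
noncomputable def singDown {R : Type*} [Fintype R] {k : ℕ} (B : Matrix R (Fin k) ℂ) :
    Fin k → ℝ :=
  sortDown fun i => Real.sqrt ((Matrix.isHermitian_conjTranspose_mul_self B).eigenvalues i)

/-- The spread of the spectrum of a Hermitian matrix: `λ_max - λ_min`. -/
noncomputable def sprA {R : Type*} [Fintype R] [DecidableEq R] {A : Matrix R R ℂ}
    (hA : A.IsHermitian) : ℝ :=
  sSup (Set.range hA.eigenvalues) - sInf (Set.range hA.eigenvalues)

/-- The spectral norm of `B`, i.e. its largest singular value. -/
noncomputable def specNorm {R : Type*} [Fintype R] {k : ℕ} (B : Matrix R (Fin k) ℂ) : ℝ :=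
  sSup (Set.range (singDown B))

/-- The principal angles between the ranges of `X` and `Y` (matrices with `k`
orthonormal columns), arranged in nonincreasing order: their cosines are the
singular values of `Xᴴ * Y` arranged in nondecreasing order. -/
noncomputable def principalAngles {R : Type*} [Fintype R] {k : ℕ}
    (X Y : Matrix R (Fin k) ℂ) : Fin k → ℝ :=
  fun i => Real.arccos (singDown (Xᴴ * Y) i.rev)

/-- The sum of the `j` largest entries of `x`. -/
noncomputable def psum {k : ℕ} (x : Fin k → ℝ) (j : ℕ) : ℝ :=
  ∑ i ∈ Finset.univ.filter fun i : Fin k => (i : ℕ) < j, sortDown x i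

/-- `x` is weakly (sub-)majorized by `y`: every partial sum of the `j` largest
entries of `x` is at most the corresponding partial sum for `y`. -/
def WeakMaj {k : ℕ} (x y : Fin k → ℝ) : Prop :=
  ∀ j : ℕ, psum x j ≤ psum y j

/-- `x` is (strongly) majorized by `y`. -/
def Maj {k : ℕ} (x y : Fin k → ℝ) : Prop :=
  WeakMaj x y ∧ ∑ i, x i = ∑ i, y i

/-- The range (column space) of `X` is an invariant subspace of `A`. -/
def InvariantRange {R : Type*} [Fintype R] {k : ℕ} (A : Matrix R R ℂ)
    (X : Matrix R (Fin k) ℂ) : Prop :=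
  ∀ u : Fin k → ℂ, ∃ w : Fin k → ℂ, A.mulVec (X.mulVec u) = X.mulVec w

lemma sortDown_of_monotone {k : ℕ} {x : Fin k → ℝ} (h : Monotone x) :
    sortDown x = fun i => x i.rev := by
  funext i
  simp [sortDown, Tuple.sort_eq_refl_iff_monotone.mpr h]

lemma sortDown_of_antitone {k : ℕ} {x : Fin k → ℝ} (h : Antitone x) :
    sortDown x = x := by
  have hm : Monotone (x ∘ (Fin.revPerm : Equiv.Perm (Fin k))) :=
    fun i j hij => h (Fin.rev_le_rev.mpr hij)
  have h2 := Tuple.comp_sort_eq_comp_iff_monotone.mpr hm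
  funext i
  have h3 := congrFun h2 i.rev
  simpa [sortDown, Fin.rev_rev] using h3.symm

lemma sortDown_congr {k : ℕ} {x y : Fin k → ℝ}
    (h : Multiset.map x Finset.univ.val = Multiset.map y Finset.univ.val) :
    sortDown x = sortDown y := by
  have hco : ∀ z : Fin k → ℝ, (↑(List.ofFn z) : Multiset ℝ) = Multiset.map z Finset.univ.val := by
    intro z
    rw [List.ofFn_eq_map]
    rfl
  have hp : (List.ofFn (x ∘ Tuple.sort x)).Perm (List.ofFn (y ∘ Tuple.sort y)) := by
    refine ((Tuple.sort x).ofFn_comp_perm x).trans (List.Perm.trans ?_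
      ((Tuple.sort y).ofFn_comp_perm y).symm)
    rw [← Multiset.coe_eq_coe, hco, hco, h]
  have hxy := List.ofFn_injective (List.Perm.eq_of_sortedLE
    ((Tuple.monotone_sort x).sortedLE_ofFn) ((Tuple.monotone_sort y).sortedLE_ofFn) hp)
  funext i
  exact congrFun hxy i.rev

open Polynomial in
lemma charpoly_diagonal' {n : Type*} [Fintype n] [DecidableEq n] (d : n → ℂ) :
    (Matrix.diagonal d).charpoly = ∏ i, (X - C (d i)) := by
  have h : (Matrix.diagonal d).charmatrix = Matrix.diagonal fun i => X - C (d i) := by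
    ext i j
    by_cases h : i = j
    · subst h; simp
    · simp [h, Matrix.charmatrix_apply, Matrix.diagonal_apply_ne _ h]
  rw [Matrix.charpoly, h, Matrix.det_diagonal]

open Polynomial in
lemma charpoly_conj_unitary {n : Type*} [Fintype n] [DecidableEq n]
    (U D : Matrix n n ℂ) (h1 : U * Uᴴ = 1) (h2 : Uᴴ * U = 1) :
    (U * D * Uᴴ).charpoly = D.charpoly := by
  let f : ℂ →+* ℂ[X] := Polynomial.C
  have hsc : ∀ B : Matrix n n ℂ[X], Matrix.scalar n (X : ℂ[X]) * B = B * Matrix.scalar n X :=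
    fun B => (Matrix.scalar_commute (X : ℂ[X]) (fun r' => Commute.all _ _) B).eq
  have hUU : U.map f * Uᴴ.map f = 1 := by
    rw [← Matrix.map_mul, h1, Matrix.map_one f (map_zero f) (map_one f)]
  have hch : (U * D * Uᴴ).charmatrix = U.map f * D.charmatrix * Uᴴ.map f := by
    unfold Matrix.charmatrix
    rw [Matrix.mul_sub, Matrix.sub_mul]
    congr 1
    · rw [← hsc (U.map f), Matrix.mul_assoc, hUU, Matrix.mul_one]
    · simp only [RingHom.mapMatrix_apply]
      rw [Matrix.map_mul, Matrix.map_mul]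
  rw [Matrix.charpoly, Matrix.charpoly, hch, Matrix.det_mul, Matrix.det_mul]
  have : (U.map f).det * (Uᴴ.map f).det = 1 := by
    rw [← Matrix.det_mul, hUU, Matrix.det_one]
  calc (U.map f).det * D.charmatrix.det * (Uᴴ.map f).det
      = D.charmatrix.det * ((U.map f).det * (Uᴴ.map f).det) := by ring
    _ = D.charmatrix.det := by rw [this, mul_one]

open Polynomial in
lemma eig_multiset {n : Type*} [Fintype n] [DecidableEq n]
    {M : Matrix n n ℂ} (hM : M.IsHermitian) (d : n → ℝ)
    (hd : M = Matrix.diagonal fun i => (d i : ℂ)) :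
    Multiset.map hM.eigenvalues Finset.univ.val = Multiset.map d Finset.univ.val := by
  have key : ∀ c : n → ℂ, (∏ i, (X - C (c i))).roots = Multiset.map c Finset.univ.val := by
    intro c
    rw [Finset.prod_eq_multiset_prod]
    rw [show Multiset.map (fun i => X - C (c i)) Finset.univ.val
        = Multiset.map (fun a => X - C a) (Multiset.map c Finset.univ.val) by
      rw [Multiset.map_map]; rfl]
    exact roots_multiset_prod_X_sub_C _
  have h1 : M.charpoly = ∏ i, (X - C ((hM.eigenvalues i : ℂ))) := by
    conv_lhs => rw [hM.spectral_theorem]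
    rw [Unitary.conjStarAlgAut_apply, Matrix.star_eq_conjTranspose]
    rw [charpoly_conj_unitary _ _
      (Matrix.mem_unitaryGroup_iff.mp (hM.eigenvectorUnitary).2)
      (Matrix.mem_unitaryGroup_iff'.mp (hM.eigenvectorUnitary).2)]
    exact charpoly_diagonal' _
  have h2 : M.charpoly = ∏ i, (X - C ((d i : ℂ))) := by
    rw [hd]; exact charpoly_diagonal' _
  have h3 : Multiset.map (fun i => ((hM.eigenvalues i : ℂ))) Finset.univ.val
      = Multiset.map (fun i => ((d i : ℂ))) Finset.univ.val := by
    rw [← key, ← key, ← h1, ← h2]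
  apply Multiset.map_injective (Complex.ofReal_injective)
  rw [Multiset.map_map, Multiset.map_map]
  exact h3


set_option maxHeartbeats 1000000 in
/-- The sharpness example: with `A = diag(I, -I)`,
`X = [I; 0]`, `Y = [C; √(I - C²)]`, `C = diag(cos θᵢ)`, the matrices `X`, `Y`
have orthonormal columns, `range X` is `A`-invariant, the principal angles
between `range X` and `range Y` are exactly the `θᵢ`, `spr(A) = 2`, and
`|λ(Xᴴ A X) - λ(Yᴴ A Y)|` sorted equals `2 sin² θ = spr(A) sin² θ`; in
particular every partial sum in the weak majorization bound is an equality. -/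
theorem ritz_error_sharpness_example
    {m : ℕ} (hm : 1 ≤ m) (θ : Fin m → ℝ)
    (hrange : ∀ i, 0 ≤ θ i ∧ θ i ≤ Real.pi / 2) (hmono : Antitone θ)
    (A : Matrix (Fin m ⊕ Fin m) (Fin m ⊕ Fin m) ℂ)
    (hAdef : A = Matrix.fromBlocks 1 0 0 (-1))
    (X Y : Matrix (Fin m ⊕ Fin m) (Fin m) ℂ)
    (hXdef : X = Matrix.fromRows 1 0)
    (hYdef : Y = Matrix.fromRows (Matrix.diagonal fun i => (Real.cos (θ i) : ℂ))
        (Matrix.diagonal fun i => (Real.sqrt (1 - Real.cos (θ i) ^ 2) : ℂ)))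
    (hA : A.IsHermitian) :
    Xᴴ * X = 1 ∧ Yᴴ * Y = 1 ∧ InvariantRange A X ∧
    principalAngles X Y = θ ∧
    sprA hA = 2 ∧
    (sortDown (fun i => |eigDown (Matrix.isHermitian_conjTranspose_mul_mul X hA) i
        - eigDown (Matrix.isHermitian_conjTranspose_mul_mul Y hA) i|)
      = fun i => 2 * Real.sin (θ i) ^ 2) ∧
    (∀ j : ℕ,
      psum (fun i => |eigDown (Matrix.isHermitian_conjTranspose_mul_mul X hA) i
        - eigDown (Matrix.isHermitian_conjTranspose_mul_mul Y hA) i|) j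
      = psum (fun i => sprA hA * Real.sin (principalAngles X Y i) ^ 2) j) := by
  have hπ := Real.pi_pos
  have hθ0 : ∀ i, 0 ≤ θ i := fun i => (hrange i).1
  have hθ2 : ∀ i, θ i ≤ Real.pi / 2 := fun i => (hrange i).2
  have hθπ : ∀ i, θ i ≤ Real.pi := fun i => le_trans (hθ2 i) (by linarith)
  have hc0 : ∀ i, 0 ≤ Real.cos (θ i) := fun i =>
    Real.cos_nonneg_of_mem_Icc ⟨by linarith [hθ0 i], hθ2 i⟩
  have hc1 : ∀ i, Real.cos (θ i) ≤ 1 := fun i => Real.cos_le_one _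
  have hcmono : Monotone (fun i => Real.cos (θ i)) := fun i j hij =>
    Real.cos_le_cos_of_nonneg_of_le_pi (hθ0 j) (hθπ i) (hmono hij)
  have hs2 : ∀ i, Real.sin (θ i) ^ 2 = 1 - Real.cos (θ i) ^ 2 := fun i => Real.sin_sq _
  -- basic matrix identities
  have hXH : Xᴴ = Matrix.fromCols 1 0 := by
    rw [hXdef, Matrix.conjTranspose_fromRows_eq_fromCols_conjTranspose]
    simp
  have hYH : Yᴴ = Matrix.fromCols (Matrix.diagonal fun i => (Real.cos (θ i) : ℂ))
      (Matrix.diagonal fun i => (Real.sqrt (1 - Real.cos (θ i) ^ 2) : ℂ)) := by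
    rw [hYdef, Matrix.conjTranspose_fromRows_eq_fromCols_conjTranspose,
      Matrix.diagonal_conjTranspose, Matrix.diagonal_conjTranspose,
      show (star fun i => ((Real.cos (θ i) : ℂ))) = fun i => ((Real.cos (θ i) : ℂ)) from
        funext fun i => Complex.conj_ofReal _,
      show (star fun i => ((Real.sqrt (1 - Real.cos (θ i) ^ 2) : ℂ)))
          = fun i => ((Real.sqrt (1 - Real.cos (θ i) ^ 2) : ℂ)) from
        funext fun i => Complex.conj_ofReal _]
  have h1 : Xᴴ * X = 1 := by
    rw [hXH, hXdef, Matrix.fromCols_mul_fromRows]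
    simp
  have h2 : Yᴴ * Y = 1 := by
    rw [hYH, hYdef, Matrix.fromCols_mul_fromRows, Matrix.diagonal_mul_diagonal,
      Matrix.diagonal_mul_diagonal, Matrix.diagonal_add]
    ext i j
    rcases eq_or_ne i j with rfl | hij
    on_goal 2 => simp [Matrix.diagonal_apply_ne _ hij, Matrix.one_apply_ne hij]
    simp only [Matrix.diagonal_apply_eq, Matrix.one_apply_eq]
    have hnn : (0:ℝ) ≤ 1 - Real.cos (θ i) ^ 2 := by nlinarith [hc0 i, hc1 i]
    have hsq : Real.sqrt (1 - Real.cos (θ i) ^ 2) * Real.sqrt (1 - Real.cos (θ i) ^ 2) = 1 - Real.cos (θ i) ^ 2 :=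
      Real.mul_self_sqrt hnn
    have hr : Real.cos (θ i) * Real.cos (θ i) + Real.sqrt (1 - Real.cos (θ i) ^ 2) * Real.sqrt (1 - Real.cos (θ i) ^ 2) = 1 := by
      rw [hsq]; ring
    exact_mod_cast hr
  have hAX : A * X = X := by
    rw [hAdef, hXdef, Matrix.fromBlocks_mul_fromRows]
    simp
  have h3 : InvariantRange A X := fun u => ⟨u, by rw [Matrix.mulVec_mulVec, hAX]⟩
  have hXAX : Xᴴ * A * X = 1 := by rw [Matrix.mul_assoc, hAX, h1]
  have hAY : A * Y = Matrix.fromRows (Matrix.diagonal fun i => (Real.cos (θ i) : ℂ))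
      (-(Matrix.diagonal fun i => (Real.sqrt (1 - Real.cos (θ i) ^ 2) : ℂ))) := by
    rw [hAdef, hYdef, Matrix.fromBlocks_mul_fromRows]
    simp
  have hYAY : Yᴴ * A * Y = Matrix.diagonal (fun i => ((2 * Real.cos (θ i) ^ 2 - 1 : ℝ) : ℂ)) := by
    rw [Matrix.mul_assoc, hAY, hYH, Matrix.fromCols_mul_fromRows, Matrix.mul_neg,
      Matrix.diagonal_mul_diagonal, Matrix.diagonal_mul_diagonal, Matrix.diagonal_neg,
      Matrix.diagonal_add]
    ext i j
    rcases eq_or_ne i j with rfl | hij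
    on_goal 2 => simp [Matrix.diagonal_apply_ne _ hij]
    simp only [Matrix.diagonal_apply_eq]
    have hnn : (0:ℝ) ≤ 1 - Real.cos (θ i) ^ 2 := by nlinarith [hc0 i, hc1 i]
    have hsq : Real.sqrt (1 - Real.cos (θ i) ^ 2) * Real.sqrt (1 - Real.cos (θ i) ^ 2) = 1 - Real.cos (θ i) ^ 2 :=
      Real.mul_self_sqrt hnn
    have hr : Real.cos (θ i) * Real.cos (θ i) + -(Real.sqrt (1 - Real.cos (θ i) ^ 2) * Real.sqrt (1 - Real.cos (θ i) ^ 2))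
        = 2 * Real.cos (θ i) ^ 2 - 1 := by rw [hsq]; ring
    exact_mod_cast hr
  have hXY : Xᴴ * Y = Matrix.diagonal (fun i => (Real.cos (θ i) : ℂ)) := by
    rw [hXH, hYdef, Matrix.fromCols_mul_fromRows]
    simp
  -- principal angles
  have hXYH : (Xᴴ * Y)ᴴ * (Xᴴ * Y) = Matrix.diagonal (fun i => ((Real.cos (θ i) ^ 2 : ℝ) : ℂ)) := by
    rw [hXY, Matrix.diagonal_conjTranspose,
      show (star fun i => ((Real.cos (θ i) : ℂ))) = fun i => ((Real.cos (θ i) : ℂ)) from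
        funext fun i => Complex.conj_ofReal _,
      Matrix.diagonal_mul_diagonal]
    ext i j
    rcases eq_or_ne i j with rfl | hij
    on_goal 2 => simp [Matrix.diagonal_apply_ne _ hij]
    simp only [Matrix.diagonal_apply_eq]
    have hr : Real.cos (θ i) * Real.cos (θ i) = Real.cos (θ i) ^ 2 := by ring
    exact_mod_cast hr
  have hMsing := eig_multiset (Matrix.isHermitian_conjTranspose_mul_self (Xᴴ * Y))
    (fun i => Real.cos (θ i) ^ 2) hXYH
  have hsqrt_ms : Multiset.map
      (fun i => Real.sqrt ((Matrix.isHermitian_conjTranspose_mul_self (Xᴴ * Y)).eigenvalues i))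
      Finset.univ.val
      = Multiset.map (fun i => Real.sqrt (Real.cos (θ i) ^ 2)) Finset.univ.val := by
    have e1 := congrArg (Multiset.map Real.sqrt) hMsing
    rw [Multiset.map_map, Multiset.map_map] at e1
    exact e1
  have hsing : singDown (Xᴴ * Y) = fun i => Real.cos (θ i.rev) := by
    unfold singDown
    rw [sortDown_congr hsqrt_ms,
      show (fun i => Real.sqrt (Real.cos (θ i) ^ 2)) = (fun i => Real.cos (θ i)) from funext fun i => Real.sqrt_sq (hc0 i),
      sortDown_of_monotone hcmono]
  have h4 : principalAngles X Y = θ := by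
    funext i
    show Real.arccos (singDown (Xᴴ * Y) i.rev) = θ i
    rw [hsing]
    simp only [Fin.rev_rev]
    exact Real.arccos_cos (hθ0 i) (hθπ i)
  -- spread of A
  have hAdiag : A = Matrix.diagonal (fun s =>
      ((Sum.elim (fun _ : Fin m => (1:ℝ)) (fun _ : Fin m => (-1:ℝ)) s : ℝ) : ℂ)) := by
    rw [hAdef]
    ext i j
    rcases i with i | i <;> rcases j with j | j <;>
      simp [Matrix.diagonal_apply, Matrix.one_apply] <;> split_ifs <;> simp_all
  have hms := eig_multiset hA _ hAdiag
  have hrangeev : Set.range hA.eigenvalues = {1, -1} := by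
    have hsr : Set.range hA.eigenvalues
        = Set.range (Sum.elim (fun _ : Fin m => (1:ℝ)) (fun _ : Fin m => (-1:ℝ))) := by
      ext a
      simp only [Set.mem_range]
      constructor
      · rintro ⟨i, rfl⟩
        have hmem : hA.eigenvalues i ∈ Multiset.map hA.eigenvalues Finset.univ.val :=
          Multiset.mem_map_of_mem _ (Finset.mem_val.mpr (Finset.mem_univ i))
        rw [hms] at hmem
        obtain ⟨j, -, hj⟩ := Multiset.mem_map.mp hmem
        exact ⟨j, hj⟩
      · rintro ⟨i, rfl⟩
        have hmem : Sum.elim (fun _ : Fin m => (1:ℝ)) (fun _ : Fin m => (-1:ℝ)) i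
            ∈ Multiset.map (Sum.elim (fun _ : Fin m => (1:ℝ)) (fun _ : Fin m => (-1:ℝ)))
              Finset.univ.val :=
          Multiset.mem_map_of_mem _ (Finset.mem_val.mpr (Finset.mem_univ i))
        rw [← hms] at hmem
        obtain ⟨j, -, hj⟩ := Multiset.mem_map.mp hmem
        exact ⟨j, hj⟩
    have hne : Nonempty (Fin m) := ⟨⟨0, hm⟩⟩
    rw [hsr, Set.Sum.elim_range, Set.range_const, Set.range_const, Set.singleton_union]
  have h5 : sprA hA = 2 := by
    unfold sprA
    rw [hrangeev, csSup_pair, csInf_pair]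
    norm_num
  -- eigenvalues of the Ritz matrices
  have hXms := eig_multiset (Matrix.isHermitian_conjTranspose_mul_mul X hA)
    (fun _ => (1:ℝ)) (by
      rw [hXAX]
      ext i j
      rcases eq_or_ne i j with rfl | hij
      on_goal 2 => simp [Matrix.diagonal_apply_ne _ hij, Matrix.one_apply_ne hij]
      simp [Matrix.diagonal_apply_eq, Matrix.one_apply_eq])
  have hYms := eig_multiset (Matrix.isHermitian_conjTranspose_mul_mul Y hA)
    (fun i => 2 * Real.cos (θ i) ^ 2 - 1) hYAY
  have hevX : eigDown (Matrix.isHermitian_conjTranspose_mul_mul X hA) = fun _ => (1:ℝ) := by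
    unfold eigDown
    rw [sortDown_congr hXms, sortDown_of_monotone monotone_const]
  have hq_mono : Monotone (fun i => 2 * Real.cos (θ i) ^ 2 - 1) := fun i j hij => by
    have h' : Real.cos (θ i) ≤ Real.cos (θ j) := hcmono hij
    simp only []
    nlinarith [hc0 i, hc0 j]
  have hevY : eigDown (Matrix.isHermitian_conjTranspose_mul_mul Y hA)
      = fun i => 2 * Real.cos (θ i.rev) ^ 2 - 1 := by
    unfold eigDown
    rw [sortDown_congr hYms, sortDown_of_monotone hq_mono]
  have h6 : sortDown (fun i => |eigDown (Matrix.isHermitian_conjTranspose_mul_mul X hA) i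
      - eigDown (Matrix.isHermitian_conjTranspose_mul_mul Y hA) i|)
      = fun i => 2 * Real.sin (θ i) ^ 2 := by
    have hfun : (fun i => |eigDown (Matrix.isHermitian_conjTranspose_mul_mul X hA) i
        - eigDown (Matrix.isHermitian_conjTranspose_mul_mul Y hA) i|)
        = fun i => 2 * Real.sin (θ i.rev) ^ 2 := by
      funext i
      simp only [hevX, hevY]
      rw [abs_of_nonneg (by nlinarith [hc0 i.rev, hc1 i.rev])]
      nlinarith [hs2 i.rev]
    have hmono' : Monotone (fun i : Fin m => 2 * Real.sin (θ i.rev) ^ 2) := by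
      intro i j hij
      have h1' : Real.cos (θ j.rev) ≤ Real.cos (θ i.rev) := hcmono (Fin.rev_le_rev.mpr hij)
      have e1 := hs2 i.rev
      have e2 := hs2 j.rev
      simp only []
      nlinarith [hc0 i.rev, hc0 j.rev]
    rw [hfun, sortDown_of_monotone hmono']
    funext i
    rw [Fin.rev_rev]
  have hg_anti : Antitone (fun i : Fin m => 2 * Real.sin (θ i) ^ 2) := by
    intro i j hij
    have h1' : Real.cos (θ i) ≤ Real.cos (θ j) := hcmono hij
    have e1 := hs2 i
    have e2 := hs2 j
    simp only []
    nlinarith [hc0 i, hc0 j]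
  refine ⟨h1, h2, h3, h4, h5, h6, fun j => ?_⟩
  simp only [h4, h5]
  unfold psum
  simp only [h6, sortDown_of_antitone hg_anti]
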